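/- Let H and H' be real Hilbert spaces and e : H → H' a continuous linear equivalence (so H and H' are the same space with equivalent norms, up to identification by e). Let K be a densely defined skew-selfadjoint operator on H (i.e. the adjoint of K equals −K), and let P : H → H be a compact bounded linear operator. If the conjugated operator e ∘ (K + P) ∘ e⁻¹, with domain e(D(K)), is skew-Hermitian on H' (i.e. ⟨T x, y⟩' = −⟨x, T y⟩' for all x, y in its domain), then e ∘ (K + P) ∘ e⁻¹ is skew-selfadjoint on H'. -/

import Mathlib

open scoped RealInnerProductSpace

/-- The sum `K + P` of a partially defined operator `K` and an everywhere-defined bounded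
operator `P`, as a partially defined operator with domain `K.domain`. -/
noncomputable def LinearPMap.addContinuous {H : Type*} [NormedAddCommGroup H]
    [InnerProductSpace ℝ H] (K : H →ₗ.[ℝ] H) (P : H →L[ℝ] H) : H →ₗ.[ℝ] H where
  domain := K.domain
  toFun := K.toFun + (P.toLinearMap.comp K.domain.subtype)

/-- The conjugate `e ∘ S ∘ e⁻¹` of a partially defined operator `S` on `H` by a continuous
linear equivalence `e : H ≃L[ℝ] H'`, with domain `e(D(S))`. -/
noncomputable def LinearPMap.conjCLE {H H' : Type*} [NormedAddCommGroup H]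
    [InnerProductSpace ℝ H] [NormedAddCommGroup H'] [InnerProductSpace ℝ H']
    (e : H ≃L[ℝ] H') (S : H →ₗ.[ℝ] H) : H' →ₗ.[ℝ] H' where
  domain := S.domain.map (e.toLinearEquiv : H →ₗ[ℝ] H')
  toFun := (e.toLinearEquiv.toLinearMap.comp S.toFun).comp
      (e.toLinearEquiv.submoduleMap S.domain).symm.toLinearMap

section Fredholm

variable {H : Type*} [NormedAddCommGroup H] [InnerProductSpace ℝ H]

lemma IsCompactOperator.exists_subseq_tendsto {C : H →L[ℝ] H} (hC : IsCompactOperator ⇑C)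
    {x : ℕ → H} {M : ℝ} (hx : ∀ n, ‖x n‖ ≤ M) :
    ∃ φ : ℕ → ℕ, StrictMono φ ∧ ∃ z : H, Filter.Tendsto (fun n => C (x (φ n)))
      Filter.atTop (nhds z) := by
  have hM : (0:ℝ) ≤ M := le_trans (norm_nonneg _) (hx 0)
  have hcpt := hC.isCompact_closure_image_closedBall (𝕜₁ := ℝ) (M + 1)
  have hmem : ∀ n, C (x n) ∈ closure (⇑C '' Metric.closedBall 0 (M + 1)) := fun n =>
    subset_closure ⟨x n, by simpa using le_trans (hx n) (by linarith), rfl⟩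
  obtain ⟨z, _, φ, hφ, hconv⟩ := hcpt.tendsto_subseq hmem
  exact ⟨φ, hφ, z, hconv⟩

/-- An injective compact perturbation of the identity is bounded below. -/
lemma exists_bound_of_injective {C : H →L[ℝ] H} (hC : IsCompactOperator ⇑C)
    {A : H →L[ℝ] H} (hA : ∀ v, A v = v + C v) (hinj : Function.Injective ⇑A) :
    ∃ k : ℝ, 0 < k ∧ ∀ v, ‖v‖ ≤ k * ‖A v‖ := by
  by_contra hcon
  push_neg at hcon
  have key : ∀ n : ℕ, ∃ v : H, ‖v‖ = 1 ∧ ‖A v‖ < 1 / (n + 1) := by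
    intro n
    obtain ⟨v, hv⟩ := hcon (n + 1) (by positivity)
    have hv0 : v ≠ 0 := by
      intro h; rw [h] at hv; simp at hv
    refine ⟨‖v‖⁻¹ • v, ?_, ?_⟩
    · simp [norm_smul, inv_mul_cancel₀ (norm_ne_zero_iff.mpr hv0)]
    · have hvpos : 0 < ‖v‖ := norm_pos_iff.mpr hv0
      rw [map_smul, norm_smul]
      rw [div_eq_mul_inv, one_mul]
      have h2 : ((n:ℝ) + 1) * ‖A v‖ < ‖v‖ := hv
      have : ‖A v‖ < ‖v‖ / (n+1) := by
        rw [lt_div_iff₀ (by positivity)]; linarith [mul_comm ((n:ℝ)+1) ‖A v‖]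
      calc ‖‖v‖⁻¹‖ * ‖A v‖ = ‖v‖⁻¹ * ‖A v‖ := by rw [norm_inv, norm_norm]
        _ < ‖v‖⁻¹ * (‖v‖ / (n+1)) := by
            apply mul_lt_mul_of_pos_left this (by positivity)
        _ = ((n:ℝ)+1)⁻¹ := by field_simp
  choose v hv1 hv2 using key
  obtain ⟨φ, hφ, z, hz⟩ := hC.exists_subseq_tendsto (M := 1) (x := v) (fun n => (hv1 n).le)
  have hAv : Filter.Tendsto (fun n => A (v (φ n))) Filter.atTop (nhds 0) := by
    rw [tendsto_iff_norm_sub_tendsto_zero]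
    apply squeeze_zero (fun n => norm_nonneg _) (fun n => ?_)
      (g := fun n => 1 / ((φ n : ℝ) + 1))
    · apply Filter.Tendsto.comp (f := fun n => (φ n : ℕ))
        (g := fun m : ℕ => 1 / ((m : ℝ) + 1)) tendsto_one_div_add_atTop_nhds_zero_nat
        hφ.tendsto_atTop
    · simpa using (hv2 (φ n)).le
  have hvconv : Filter.Tendsto (fun n => v (φ n)) Filter.atTop (nhds (-z)) := by
    have : (fun n => v (φ n)) = fun n => A (v (φ n)) - C (v (φ n)) := by
      funext n; rw [hA]; abel
    rw [this]
    simpa using hAv.sub hz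
  have hnz : ‖(-z : H)‖ = 1 := by
    have := (continuous_norm.tendsto (-z)).comp hvconv
    have h1 : Filter.Tendsto (fun n => ‖v (φ n)‖) Filter.atTop (nhds ‖(-z:H)‖) := this
    have h2 : Filter.Tendsto (fun n => ‖v (φ n)‖) Filter.atTop (nhds 1) := by
      simpa [hv1] using tendsto_const_nhds (x := (1:ℝ))
    exact tendsto_nhds_unique h1 h2
  have hAz : A (-z) = 0 := by
    have h1 : Filter.Tendsto (fun n => A (v (φ n))) Filter.atTop (nhds (A (-z))) :=
      (A.continuous.tendsto _).comp hvconv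
    exact tendsto_nhds_unique h1 hAv
  have : (-z : H) = 0 := hinj (by simpa using hAz)
  rw [this] at hnz; simp at hnz

/-- An injective compact perturbation of the identity has closed range. -/
lemma isClosed_range_of_injective [CompleteSpace H] {C : H →L[ℝ] H} (hC : IsCompactOperator ⇑C)
    {A : H →L[ℝ] H} (hA : ∀ v, A v = v + C v) (hinj : Function.Injective ⇑A) :
    IsClosed (Set.range ⇑A) := by
  obtain ⟨k, hk, hbound⟩ := exists_bound_of_injective hC hA hinj
  have : AntilipschitzWith (Real.toNNReal k) ⇑A := by
    apply AntilipschitzWith.of_le_mul_dist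
    intro x y
    rw [dist_eq_norm, dist_eq_norm, ← map_sub]
    calc ‖x - y‖ ≤ k * ‖A (x-y)‖ := hbound _
      _ ≤ Real.toNNReal k * ‖A (x - y)‖ := by
          apply mul_le_mul_of_nonneg_right _ (norm_nonneg _)
          exact (Real.coe_toNNReal' k ▸ le_max_left _ _)
  exact this.isClosed_range A.uniformContinuous

/-- **Fredholm alternative**: an injective compact perturbation of the identity on a Hilbert
space is surjective. -/
theorem fredholm_alternative [CompleteSpace H] {C : H →L[ℝ] H} (hC : IsCompactOperator ⇑C)
    {A : H →L[ℝ] H} (hA : ∀ v, A v = v + C v) (hinj : Function.Injective ⇑A) :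
    Function.Surjective ⇑A := by
  have hAC : A = 1 + C := by ext v; simpa using hA v
  -- compactness of `A ^ n - 1`
  have hCn : ∀ n : ℕ, IsCompactOperator ⇑(A ^ n - 1) := by
    intro n
    induction n with
    | zero => simpa using isCompactOperator_zero
    | succ n ih =>
      have heq : A ^ (n+1) - 1 = (A ^ n - 1) + A ^ n * C := by
        rw [pow_succ, hAC]; noncomm_ring
      rw [heq]
      exact ih.add (by simpa [FunLike.coe_mul_eq_comp, Module.End.coe_mul, Module.End.coe_pow] using hC.clm_comp (A ^ n))
  have hpow_apply : ∀ (n : ℕ) (v : H), (A ^ n) v = v + (A ^ n - 1) v := by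
    intro n v; simp
  have hpow_inj : ∀ n : ℕ, Function.Injective ⇑(A ^ n) := by
    intro n
    induction n with
    | zero => simpa using Function.injective_id
    | succ n ih =>
      rw [pow_succ, FunLike.coe_mul_eq_comp]
      exact ih.comp hinj
  by_contra hsurj
  unfold Function.Surjective at hsurj
  push_neg at hsurj
  obtain ⟨z, hz⟩ := hsurj
  set D : ℕ → Submodule ℝ H := fun n => LinearMap.range ((A ^ n : H →L[ℝ] H) : H →ₗ[ℝ] H) with hD
  have hDclosed : ∀ n, IsClosed (D n : Set H) := by
    intro n
    have := isClosed_range_of_injective (hCn n) (hpow_apply n) (hpow_inj n)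
    simpa [hD, LinearMap.coe_range, Module.End.coe_pow] using this
  have hDsucc : ∀ n, D (n + 1) ≤ D n := by
    intro n w hw
    obtain ⟨v, rfl⟩ := hw
    exact ⟨A v, by rw [pow_succ]; rfl⟩
  have hDmono : Antitone D := antitone_nat_of_succ_le hDsucc
  have hAD : ∀ (n : ℕ) (w : H), w ∈ D n → A w ∈ D (n + 1) := by
    intro n w hw
    obtain ⟨v, rfl⟩ := hw
    exact ⟨v, by rw [pow_succ', ContinuousLinearMap.coe_coe]; rfl⟩
  have hstrict : ∀ n, ∃ w, w ∈ D n ∧ w ∉ D (n + 1) := by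
    intro n
    by_contra hcon
    push_neg at hcon
    have : (A ^ n) z ∈ D (n + 1) := hcon _ ⟨z, rfl⟩
    obtain ⟨v, hv⟩ := this
    rw [pow_succ, ContinuousLinearMap.coe_coe] at hv
    exact hz v (hpow_inj n hv)
  -- choose a unit vector in `D n` orthogonal to `D (n+1)`
  have hx : ∀ n, ∃ u, u ∈ D n ∧ ‖u‖ = 1 ∧ ∀ w ∈ D (n + 1), ⟪u, w⟫ = 0 := by
    intro n
    obtain ⟨w, hwn, hwn1⟩ := hstrict n
    haveI : CompleteSpace (D (n + 1)) := (hDclosed (n + 1)).completeSpace_coe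
    set u := w - (Submodule.orthogonalProjectionOnto (D (n + 1)) w : H) with hu
    have humem : u ∈ D n := by
      apply Submodule.sub_mem _ hwn
      exact hDsucc n (Submodule.orthogonalProjectionOnto (D (n+1)) w).2
    have huperp : u ∈ (D (n + 1))ᗮ := Submodule.sub_starProjection_mem_orthogonal w
    have hune : u ≠ 0 := by
      intro h
      apply hwn1
      rw [hu, sub_eq_zero] at h
      rw [h]
      exact (Submodule.orthogonalProjectionOnto (D (n+1)) w).2
    refine ⟨‖u‖⁻¹ • u, Submodule.smul_mem _ _ humem, ?_, ?_⟩
    · simp [norm_smul, inv_mul_cancel₀ (norm_ne_zero_iff.mpr hune)]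
    · intro v hv
      rw [real_inner_smul_left, (Submodule.mem_orthogonal' _ _).mp huperp v hv, mul_zero]
  choose x hxD hxnorm hxperp using hx
  -- separation estimate
  have hsep : ∀ n m, n < m → 1 ≤ ‖C (x n) - C (x m)‖ := by
    intro n m hnm
    have hrw : C (x n) - C (x m) = -(x n) + (A (x n) - A (x m) + x m) := by
      have h1 : C (x n) = A (x n) - x n := by rw [hA]; abel
      have h2 : C (x m) = A (x m) - x m := by rw [hA]; abel
      rw [h1, h2]; abel
    have hmem1 : A (x n) - A (x m) + x m ∈ D (n + 1) := by
      refine Submodule.add_mem _ (Submodule.sub_mem _ (hAD n _ (hxD n)) ?_) ?_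
      · exact hDmono (by omega : n + 1 ≤ m + 1) (hAD m _ (hxD m))
      · exact hDmono (by omega : n + 1 ≤ m) (hxD m)
    have hinner : ⟪x n, C (x n) - C (x m)⟫ = -1 := by
      rw [hrw, inner_add_right, inner_neg_right, hxperp n _ hmem1,
        real_inner_self_eq_norm_sq, hxnorm n]
      norm_num
    have := abs_real_inner_le_norm (x n) (C (x n) - C (x m))
    rw [hinner, hxnorm n] at this
    simpa using this
  -- contradiction with compactness
  obtain ⟨φ, hφ, w, hconv⟩ := hC.exists_subseq_tendsto (M := 1) (x := x)
    (fun n => (hxnorm n).le)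
  have hcauchy := hconv.cauchySeq
  rw [Metric.cauchySeq_iff] at hcauchy
  obtain ⟨N, hN⟩ := hcauchy 1 one_pos
  have h1 := hN N le_rfl (N + 1) (by omega)
  rw [dist_eq_norm] at h1
  exact absurd h1 (not_lt.mpr (hsep _ _ (hφ (by omega : N < N + 1))))

end Fredholm


section Unbounded

variable {H : Type*} [NormedAddCommGroup H] [InnerProductSpace ℝ H] [CompleteSpace H]
variable {K : H →ₗ.[ℝ] H}

lemma skew_domain_adjoint (hKskew : K.adjoint = -K) : K.adjoint.domain = K.domain := by
  rw [hKskew]; rfl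

lemma skew_adjoint_apply' (hKskew : K.adjoint = -K) (x : H) (hx : x ∈ K.adjoint.domain)
    (hx' : x ∈ K.domain) : K.adjoint ⟨x, hx⟩ = -K ⟨x, hx'⟩ := by
  obtain ⟨hdom, hfun⟩ := LinearPMap.ext_iff.mp hKskew
  have h := hfun (x := x) (hf := hx) (hg := hx')
  rwa [LinearPMap.neg_apply] at h

lemma skew_pair (hdense : Dense (K.domain : Set H)) (hKskew : K.adjoint = -K)
    (x y : K.domain) : ⟪K x, (y : H)⟫ = -⟪(x : H), K y⟫ := by
  have hf := LinearPMap.adjoint_isFormalAdjoint hdense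
  have hx : (x : H) ∈ K.adjoint.domain := by rw [skew_domain_adjoint hKskew]; exact x.2
  have h := hf ⟨(x : H), hx⟩ y
  rw [skew_adjoint_apply' hKskew (x : H) hx x.2, inner_neg_left] at h
  have hxx : K ⟨(x:H), x.2⟩ = K x := by congr
  rw [hxx] at h
  linarith

lemma skew_inner_self (hdense : Dense (K.domain : Set H)) (hKskew : K.adjoint = -K)
    (x : K.domain) : ⟪K x, (x : H)⟫ = 0 := by
  have := skew_pair hdense hKskew x x
  rw [real_inner_comm (K x) (x : H)] at this
  linarith [this, real_inner_comm (x : H) (K x)]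

lemma skew_lower_bound (hdense : Dense (K.domain : Set H)) (hKskew : K.adjoint = -K)
    (c : ℝ) (x : K.domain) : |c| * ‖(x : H)‖ ≤ ‖K x + c • (x : H)‖ := by
  have h0 := skew_inner_self hdense hKskew x
  have hsq : ‖K x + c • (x:H)‖ ^ 2 = ‖K x‖ ^ 2 + c ^ 2 * ‖(x:H)‖ ^ 2 := by
    rw [norm_add_sq_real, real_inner_smul_right, h0, norm_smul, Real.norm_eq_abs, mul_pow,
      sq_abs]
    ring
  nlinarith [norm_nonneg (K x + c • (x:H)), norm_nonneg (K x), norm_nonneg (x:H),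
    abs_nonneg c, sq_abs c]

section KSurj

/-- `K + c` is surjective for `c ≠ 0` when `K` is skew-selfadjoint. -/
theorem skew_add_const_surj (hdense : Dense (K.domain : Set H)) (hKskew : K.adjoint = -K)
    (c : ℝ) (hc : c ≠ 0) (z : H) :
    ∃ x : K.domain, K x + c • (x : H) = z := by
  set L : K.domain →ₗ[ℝ] H := K.toFun + c • K.domain.subtype with hL
  have hLapp : ∀ x : K.domain, L x = K x + c • (x : H) := fun x => rfl
  set R : Submodule ℝ H := LinearMap.range L with hR
  have hcpos : 0 < |c| := abs_pos.mpr hc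
  -- closedness of the range
  have hRclosed : IsClosed (R : Set H) := by
    rw [← isSeqClosed_iff_isClosed]
    intro f z hf hfz
    choose xs hxs using hf
    have hcauchy : CauchySeq (fun n => (xs n : H)) := by
      rw [Metric.cauchySeq_iff]
      intro ε hε
      obtain ⟨N, hN⟩ := (Metric.cauchySeq_iff.mp hfz.cauchySeq) (|c| * ε) (by positivity)
      refine ⟨N, fun m hm n hn => ?_⟩
      have hb := skew_lower_bound hdense hKskew c (xs m - xs n)
      rw [LinearPMap.map_sub] at hb
      have hLsub : K (xs m) - K (xs n) + c • ((xs m - xs n : K.domain) : H)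
          = f m - f n := by
        rw [← hxs m, ← hxs n, hLapp, hLapp]
        push_cast
        rw [smul_sub]
        abel
      rw [hLsub] at hb
      have hd := hN m hm n hn
      rw [dist_eq_norm] at hd ⊢
      have : ‖(xs m : H) - (xs n : H)‖ ≤ |c|⁻¹ * ‖f m - f n‖ := by
        rw [le_inv_mul_iff₀ hcpos]
        calc |c| * ‖(xs m : H) - (xs n : H)‖
            = |c| * ‖((xs m - xs n : K.domain) : H)‖ := by push_cast; ring_nf
          _ ≤ ‖f m - f n‖ := hb
      calc ‖(xs m : H) - (xs n : H)‖ ≤ |c|⁻¹ * ‖f m - f n‖ := this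
        _ < |c|⁻¹ * (|c| * ε) := by
            apply mul_lt_mul_of_pos_left hd (by positivity)
        _ = ε := by field_simp
    obtain ⟨x, hx⟩ := cauchySeq_tendsto_of_complete hcauchy
    have hKx : Filter.Tendsto (fun n => K (xs n)) Filter.atTop (nhds (z - c • x)) := by
      have : (fun n => K (xs n)) = fun n => f n - c • (xs n : H) := by
        funext n; rw [← hxs n, hLapp]; abel
      rw [this]
      exact hfz.sub (hx.const_smul c)
    -- use the adjoint to show that `x ∈ K.domain` and `K x = z - c • x`
    have hval : ∀ v : K.domain, ⟪-(z - c • x), (v : H)⟫ = ⟪x, K v⟫ := by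
      intro v
      have h1 : Filter.Tendsto (fun n => ⟪K (xs n), (v:H)⟫) Filter.atTop
          (nhds ⟪z - c • x, (v:H)⟫) := hKx.inner tendsto_const_nhds
      have h2 : Filter.Tendsto (fun n => ⟪(xs n : H), K v⟫) Filter.atTop
          (nhds ⟪x, K v⟫) := hx.inner tendsto_const_nhds
      have h3 : ∀ n, ⟪K (xs n), (v:H)⟫ = -⟪(xs n : H), K v⟫ :=
        fun n => skew_pair hdense hKskew (xs n) v
      have h4 : Filter.Tendsto (fun n => ⟪K (xs n), (v:H)⟫) Filter.atTop
          (nhds (-⟪x, K v⟫)) := by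
        simp_rw [h3]; exact h2.neg
      have := tendsto_nhds_unique h1 h4
      rw [inner_neg_left, this, neg_neg]
    have hxadj : x ∈ K.adjoint.domain :=
      LinearPMap.mem_adjoint_domain_of_exists _ ⟨-(z - c • x), hval⟩
    have hxdom : x ∈ K.domain := by
      rw [← skew_domain_adjoint hKskew]; exact hxadj
    have hadj_val : K.adjoint ⟨x, hxadj⟩ = -(z - c • x) :=
      LinearPMap.adjoint_apply_eq hdense _ hval
    rw [skew_adjoint_apply' hKskew x hxadj hxdom, neg_inj] at hadj_val
    exact ⟨⟨x, hxdom⟩, by rw [hLapp, hadj_val]; abel⟩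
  -- density of the range
  have hRperp : Rᗮ = ⊥ := by
    rw [Submodule.eq_bot_iff]
    intro w hw
    rw [Submodule.mem_orthogonal'] at hw
    have hval : ∀ v : K.domain, ⟪-c • w, (v : H)⟫ = ⟪w, K v⟫ := by
      intro v
      have := hw (L v) (LinearMap.mem_range_self L v)
      rw [hLapp, inner_add_right, real_inner_smul_right] at this
      rw [real_inner_smul_left]
      linarith
    have hwadj : w ∈ K.adjoint.domain :=
      LinearPMap.mem_adjoint_domain_of_exists _ ⟨-c • w, hval⟩
    have hwdom : w ∈ K.domain := by
      rw [← skew_domain_adjoint hKskew]; exact hwadj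
    have hadj_val : K.adjoint ⟨w, hwadj⟩ = -c • w :=
      LinearPMap.adjoint_apply_eq hdense _ hval
    rw [skew_adjoint_apply' hKskew w hwadj hwdom] at hadj_val
    have hKw : K ⟨w, hwdom⟩ = c • w := by
      have := congrArg Neg.neg hadj_val
      rw [neg_neg, neg_smul, neg_neg] at this
      exact this
    have h0 := skew_inner_self hdense hKskew ⟨w, hwdom⟩
    rw [hKw, real_inner_smul_left, real_inner_self_eq_norm_sq] at h0
    have hnw : ‖w‖ = 0 := by
      rcases mul_eq_zero.mp h0 with h | h
      · exact absurd h hc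
      · exact pow_eq_zero_iff two_ne_zero |>.mp h
    exact norm_eq_zero.mp hnw
  haveI : CompleteSpace R := hRclosed.completeSpace_coe
  have hRtop : R = ⊤ := by
    rwa [Submodule.orthogonal_eq_bot_iff] at hRperp
  have : z ∈ R := by rw [hRtop]; trivial
  obtain ⟨x, hx⟩ := this
  exact ⟨x, by rw [← hLapp, hx]⟩

end KSurj

/-- The bounded inverse of `K + c`. -/
theorem skew_exists_resolvent (hdense : Dense (K.domain : Set H)) (hKskew : K.adjoint = -K)
    (c : ℝ) (hc : c ≠ 0) :
    ∃ (Rc : H →L[ℝ] H) (g : H → K.domain),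
      (∀ z, (g z : H) = Rc z) ∧ (∀ z, K (g z) + c • ((g z : K.domain) : H) = z) := by
  set L : K.domain →ₗ[ℝ] H := K.toFun + c • K.domain.subtype with hL
  have hLapp : ∀ x : K.domain, L x = K x + c • (x : H) := fun x => rfl
  have hcpos : 0 < |c| := abs_pos.mpr hc
  have hbij : Function.Bijective L := by
    constructor
    · intro a b hab
      have hb := skew_lower_bound hdense hKskew c (a - b)
      have : L (a - b) = 0 := by rw [map_sub, hab, sub_self]
      rw [hLapp] at this
      rw [LinearPMap.map_sub] at hb
      have h2 : K a - K b + c • ((a - b : K.domain) : H) = 0 := by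
        rw [← LinearPMap.map_sub]; exact this
      rw [h2, norm_zero] at hb
      have : ‖((a - b : K.domain) : H)‖ = 0 := by
        by_contra hne
        have : 0 < ‖((a - b : K.domain) : H)‖ :=
          lt_of_le_of_ne (norm_nonneg _) (Ne.symm hne)
        nlinarith
      have : ((a - b : K.domain) : H) = 0 := norm_eq_zero.mp this
      have h3 : (a : H) - b = 0 := by push_cast at this; exact this
      exact Subtype.ext (sub_eq_zero.mp h3)
    · intro z
      obtain ⟨x, hx⟩ := skew_add_const_surj hdense hKskew c hc z
      exact ⟨x, by rw [hLapp, hx]⟩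
  set eqv := LinearEquiv.ofBijective L hbij with heqv
  set Rc0 : H →ₗ[ℝ] H := K.domain.subtype.comp eqv.symm.toLinearMap with hRc0
  have hbound : ∀ z, ‖Rc0 z‖ ≤ |c|⁻¹ * ‖z‖ := by
    intro z
    have hb := skew_lower_bound hdense hKskew c (eqv.symm z)
    have hz : K (eqv.symm z) + c • ((eqv.symm z : K.domain) : H) = z := by
      rw [← hLapp]
      exact eqv.apply_symm_apply z
    rw [hz] at hb
    rw [le_inv_mul_iff₀ hcpos]
    calc |c| * ‖Rc0 z‖ = |c| * ‖((eqv.symm z : K.domain) : H)‖ := rfl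
      _ ≤ ‖z‖ := hb
  set Rc : H →L[ℝ] H := Rc0.mkContinuous (|c|⁻¹) (fun z => by
    simpa [mul_comm] using hbound z) with hRc
  refine ⟨Rc, fun z => eqv.symm z, fun z => rfl, fun z => ?_⟩
  rw [← hLapp]
  simpa [heqv, LinearEquiv.ofBijective_apply] using eqv.apply_symm_apply z

/-- Surjectivity of the compactly perturbed operator `K + P + c`. -/
theorem skew_perturbed_surj (hdense : Dense (K.domain : Set H)) (hKskew : K.adjoint = -K)
    (P : H →L[ℝ] H) (hP : IsCompactOperator ⇑P) (c : ℝ) (hc : c ≠ 0)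
    (heig : ∀ u : K.domain, K u + P u + c • (u : H) = 0 → u = 0) (z : H) :
    ∃ u : K.domain, K u + P u + c • (u : H) = z := by
  obtain ⟨Rc, g, hg, hgK⟩ := skew_exists_resolvent hdense hKskew c hc
  set C : H →L[ℝ] H := P.comp Rc with hC
  have hCcpt : IsCompactOperator ⇑C := hP.comp_clm Rc
  set A : H →L[ℝ] H := 1 + C with hA
  have hAapp : ∀ v, A v = v + C v := fun v => rfl
  have hAinj : Function.Injective ⇑A := by
    intro a b hab
    have h0 : A (a - b) = 0 := by rw [map_sub, hab, sub_self]
    rw [hAapp] at h0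
    set v := a - b with hv
    have hCv : C v = P (Rc v) := rfl
    have huz : K (g v) + P (g v : H) + c • ((g v : K.domain) : H) = 0 := by
      have h1 := hgK v
      have h2 : (g v : H) = Rc v := hg v
      calc K (g v) + P (g v : H) + c • ((g v : K.domain) : H)
          = (K (g v) + c • ((g v : K.domain) : H)) + P (Rc v) := by rw [h2]; abel
        _ = v + C v := by rw [h1, hCv]
        _ = 0 := h0
    have hgv0 : g v = 0 := heig _ huz
    have : v = 0 := by
      have := hgK v
      rw [hgv0] at this
      simpa using this.symm
    exact sub_eq_zero.mp this
  have hAsurj := fredholm_alternative hCcpt hAapp hAinj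
  obtain ⟨v, hv⟩ := hAsurj z
  refine ⟨g v, ?_⟩
  have h2 : (g v : H) = Rc v := hg v
  calc K (g v) + P (g v : H) + c • ((g v : K.domain) : H)
      = (K (g v) + c • ((g v : K.domain) : H)) + P (Rc v) := by rw [h2]; abel
    _ = v + C v := by rw [hgK v]; rfl
    _ = z := by rw [← hAapp]; exact hv

end Unbounded

section ConjLemmas

variable {H H' : Type*} [NormedAddCommGroup H] [InnerProductSpace ℝ H]
  [NormedAddCommGroup H'] [InnerProductSpace ℝ H']

lemma conjCLE_mem (e : H ≃L[ℝ] H') (S : H →ₗ.[ℝ] H) (x : S.domain) :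
    (e (x : H) : H') ∈ (LinearPMap.conjCLE e S).domain :=
  ⟨(x : H), x.2, rfl⟩

lemma conjCLE_mem_iff (e : H ≃L[ℝ] H') (S : H →ₗ.[ℝ] H) (y : H') :
    y ∈ (LinearPMap.conjCLE e S).domain ↔ ∃ x ∈ S.domain, e x = y := by
  constructor
  · rintro ⟨x, hx, rfl⟩; exact ⟨x, hx, rfl⟩
  · rintro ⟨x, hx, rfl⟩; exact ⟨x, hx, rfl⟩

lemma conjCLE_apply (e : H ≃L[ℝ] H') (S : H →ₗ.[ℝ] H) (x : S.domain)
    (h : e (x : H) ∈ (LinearPMap.conjCLE e S).domain) :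
    (LinearPMap.conjCLE e S) ⟨e (x : H), h⟩ = e (S x) := by
  have hsym : (e.toLinearEquiv.submoduleMap S.domain).symm ⟨e (x : H), h⟩ = x := by
    rw [LinearEquiv.symm_apply_eq]
    ext
    simp [LinearEquiv.submoduleMap_apply]
  show ((e.toLinearEquiv.toLinearMap.comp S.toFun).comp
      (e.toLinearEquiv.submoduleMap S.domain).symm.toLinearMap) ⟨e (x : H), h⟩ = e (S x)
  rw [LinearMap.comp_apply, LinearEquiv.coe_toLinearMap, hsym]
  rfl

lemma conjCLE_dense (e : H ≃L[ℝ] H') {S : H →ₗ.[ℝ] H} (hd : Dense (S.domain : Set H)) :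
    Dense ((LinearPMap.conjCLE e S).domain : Set H') := by
  have hcoe : ((LinearPMap.conjCLE e S).domain : Set H') = ⇑e '' (S.domain : Set H) := by
    ext y
    simp only [LinearPMap.conjCLE, Submodule.map_coe, Set.mem_image, SetLike.mem_coe]
    rfl
  rw [dense_iff_closure_eq] at hd ⊢
  rw [hcoe]
  have himg : closure (⇑e '' (S.domain : Set H)) = ⇑e '' closure (S.domain : Set H) :=
    (e.toHomeomorph.image_closure (S.domain : Set H)).symm
  rw [himg, hd, Set.image_univ]
  exact e.surjective.range_eq

lemma addContinuous_apply {H : Type*} [NormedAddCommGroup H] [InnerProductSpace ℝ H]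
    (K : H →ₗ.[ℝ] H) (P : H →L[ℝ] H) (x : (K.addContinuous P).domain) :
    (K.addContinuous P) x = K ⟨(x : H), x.2⟩ + P (x : H) := rfl

end ConjLemmas


/-- If `K` is a densely defined skew-selfadjoint operator on the real Hilbert space `H`,
`P : H → H` is a compact bounded operator, and the conjugated operator
`e ∘ (K + P) ∘ e⁻¹` (with domain `e(D(K))`) is skew-Hermitian on `H'`, then
`e ∘ (K + P) ∘ e⁻¹` is skew-selfadjoint on `H'`. -/
theorem skewSelfAdjoint_of_compact_perturbation
    {H H' : Type*} [NormedAddCommGroup H] [InnerProductSpace ℝ H] [CompleteSpace H]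
    [NormedAddCommGroup H'] [InnerProductSpace ℝ H'] [CompleteSpace H']
    (e : H ≃L[ℝ] H')
    (K : H →ₗ.[ℝ] H) (hdense : Dense (K.domain : Set H))
    (hKskew : K.adjoint = -K)
    (P : H →L[ℝ] H) (hP : IsCompactOperator ⇑P)
    (hskew : ∀ x y : (LinearPMap.conjCLE e (K.addContinuous P)).domain,
        ⟪(LinearPMap.conjCLE e (K.addContinuous P)) x, (y : H')⟫ =
          - ⟪(x : H'), (LinearPMap.conjCLE e (K.addContinuous P)) y⟫) :
    (LinearPMap.conjCLE e (K.addContinuous P)).adjoint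
      = -(LinearPMap.conjCLE e (K.addContinuous P)) := by
  set B := K.addContinuous P with hB
  set T := LinearPMap.conjCLE e B with hT
  have hBapp : ∀ u : K.domain, B ⟨(u : H), u.2⟩ = K u + P (u : H) := fun u => rfl
  have hTdense : Dense (T.domain : Set H') := conjCLE_dense e hdense
  -- no nonzero eigenvectors with nonzero real eigenvalue
  have heig : ∀ (c : ℝ), c ≠ 0 → ∀ u : K.domain, K u + P (u : H) + c • (u : H) = 0 → u = 0 := by
    intro c hc u hu
    have hmem : e ((⟨(u : H), u.2⟩ : B.domain) : H) ∈ T.domain := conjCLE_mem e B ⟨(u : H), u.2⟩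
    have hBval : B ⟨(u : H), u.2⟩ = (-c) • (u : H) := by
      rw [hBapp u, neg_smul, eq_neg_iff_add_eq_zero]
      exact hu
    have hTu : T ⟨e (u : H), hmem⟩ = e (B ⟨(u : H), u.2⟩) := conjCLE_apply e B ⟨(u : H), u.2⟩ hmem
    rw [hBval, map_smul] at hTu
    have h := hskew ⟨e (u : H), hmem⟩ ⟨e (u : H), hmem⟩
    rw [hTu] at h
    have hcoe : ((⟨e (u : H), hmem⟩ : T.domain) : H') = e (u : H) := rfl
    rw [hcoe, real_inner_smul_left, real_inner_smul_right] at h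
    have h0 : ⟪e (u : H), e (u : H)⟫ = 0 := by
      rcases mul_eq_zero.mp (show c * ⟪e (u : H), e (u : H)⟫ = 0 by linarith) with hh | hh
      · exact absurd hh hc
      · exact hh
    have : e (u : H) = 0 := inner_self_eq_zero.mp h0
    have : (u : H) = 0 := by
      have := congrArg e.symm this
      simpa using this
    exact Subtype.ext this
  -- surjectivity of `T + c` for `c ≠ 0`
  have hTsurj : ∀ (c : ℝ), c ≠ 0 → ∀ z' : H', ∃ x : T.domain, T x + c • (x : H') = z' := by
    intro c hc z'
    obtain ⟨u, hu⟩ := skew_perturbed_surj hdense hKskew P hP c hc (heig c hc) (e.symm z')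
    have hmem : e ((⟨(u : H), u.2⟩ : B.domain) : H) ∈ T.domain := conjCLE_mem e B ⟨(u : H), u.2⟩
    refine ⟨⟨e (u : H), hmem⟩, ?_⟩
    have hTu : T ⟨e (u : H), hmem⟩ = e (B ⟨(u : H), u.2⟩) := conjCLE_apply e B ⟨(u : H), u.2⟩ hmem
    rw [hTu, hBapp u]
    show e (K u + P (u : H)) + c • e (u : H) = z'
    rw [← map_smul, ← map_add, hu, e.apply_symm_apply]
  -- key step: every element of the adjoint domain lies in `T.domain`
  have hadj := LinearPMap.adjoint_isFormalAdjoint hTdense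
  have hkey : ∀ a : T.adjoint.domain, ∃ hb : (a : H') ∈ T.domain,
      T ⟨(a : H'), hb⟩ = -(T.adjoint a) := by
    intro a
    set w := T.adjoint a with hw
    obtain ⟨x, hx⟩ := hTsurj (-1) (by norm_num) (-(w + (a : H')))
    have hTx : T x = (x : H') - w - (a : H') := by
      rw [neg_one_smul] at hx
      have h := eq_sub_of_add_eq hx
      rw [h]; abel
    have hyx : (a : H') = (x : H') := by
      rw [← sub_eq_zero, ← inner_self_eq_zero (𝕜 := ℝ)]
      set v := (a : H') - (x : H') with hv
      obtain ⟨u, hu⟩ := hTsurj 1 one_ne_zero v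
      rw [one_smul] at hu
      have e1 : ⟪T u, (a : H')⟫ = ⟪w, (u : H')⟫ := by
        have h := hadj a u
        exact (real_inner_comm _ _).trans h.symm
      have e2 : ⟪T u, (x : H')⟫ = -⟪(u : H'), T x⟫ := hskew u x
      have hzero : ⟪(T u + (u : H') : H'), v⟫ = 0 := by
        rw [inner_add_left, hv, inner_sub_right, inner_sub_right, e1, e2, hTx,
          inner_sub_right, inner_sub_right, real_inner_comm w (u : H')]
        ring
      have hvv : ⟪v, v⟫ = ⟪(T u + (u : H') : H'), v⟫ := by rw [hu]
      rw [hvv]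
      exact hzero
    refine ⟨hyx ▸ x.2, ?_⟩
    have harg : (⟨(a : H'), hyx ▸ x.2⟩ : T.domain) = x := Subtype.ext hyx
    rw [harg, hTx, ← hyx]
    abel
  -- conclusion
  have hformal : T.IsFormalAdjoint (-T) := by
    intro x y
    rw [LinearPMap.neg_apply, inner_neg_right]
    exact hskew x y
  have h1 : (-T) ≤ T.adjoint := hformal.le_adjoint hTdense
  have h2 : T.adjoint ≤ -T := by
    refine ⟨fun y hy => ?_, fun a b hab => ?_⟩
    · obtain ⟨hb, _⟩ := hkey ⟨y, hy⟩
      exact hb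
    · obtain ⟨hb, hval⟩ := hkey a
      have harg : (⟨(a : H'), hb⟩ : T.domain) = ⟨(b : H'), b.2⟩ := Subtype.ext hab
      show T.adjoint a = -(T ⟨(b : H'), b.2⟩)
      rw [← harg, hval, neg_neg]
  exact LinearPMap.eq_of_le_of_domain_eq h2 (le_antisymm h2.1 h1.1)
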